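/- Let B be a W*-algebra, E a W*-correspondence over B, and n an infinite cardinal. Suppose x_ℓ (ℓ ∈ S, #S = l ≤ n) are elements of E with Σ_{ℓ∈S} ⟨x_ℓ, x_ℓ⟩ = 1 (σ-strong convergence). Fix a bijection φ : T → S × T where #T = n, with components φ₁, φ₂. Define the matrix X = (x_{ij})_{i,j∈T} by x_{ij} = x_{φ₁(i)} δ_{φ₂(i), j}. Then X is a unit vector in M_n(E): for all i,j ∈ T, Σ_{k∈T} ⟨x_{ki}, x_{kj}⟩ = δ_{ij}·1. -/
import Mathlib


open ContinuousLinearMap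
open scoped Classical

/-- **Proposition 6.2, key computation.** Work in the concrete
picture of a W*-correspondence `E` over `B ⊆ B(G)`, realized inside
`B(G, H)` with `⟪x, y⟫ = x* y`. Suppose `x_ℓ (ℓ ∈ S)` satisfy
`∑_{ℓ ∈ S} ⟪x_ℓ, x_ℓ⟫ = 1` σ-strongly, `T` has infinite cardinality with a
bijection `φ : T ≃ S × T`, and the matrix `X = (x_{ij})_{i,j ∈ T}` is defined
by `x_{ij} = x_{φ₁(i)} δ_{φ₂(i), j}`. Then `X` is a unit vector in `M_n(E)`:
for all `i, j ∈ T`, `∑_{k ∈ T} ⟪x_{ki}, x_{kj}⟫ = δ_{ij} · 1` σ-strongly. -/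
theorem matrix_unit_vector
    {G H : Type*}
    [NormedAddCommGroup G] [InnerProductSpace ℂ G] [CompleteSpace G]
    [NormedAddCommGroup H] [InnerProductSpace ℂ H] [CompleteSpace H]
    {S T : Type*} [Infinite T]
    (x : S → (G →L[ℂ] H))
    (h_sum : ∀ g : G, HasSum (fun ℓ : S => adjoint (x ℓ) (x ℓ g)) g)
    (φ : T ≃ S × T)
    (X : T → T → (G →L[ℂ] H))
    (hX : ∀ i j : T, X i j = if (φ i).2 = j then x (φ i).1 else 0) :
    ∀ (i j : T) (g : G),
      HasSum (fun k : T => adjoint (X k i) (X k j g))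
        (if i = j then g else 0) := by
  intro i j g
  by_cases hij : i = j
  · subst hij
    simp only [if_pos rfl]
    set f : T → G := fun k => adjoint (X k i) (X k i g) with hf
    have hinj : Function.Injective (fun ℓ : S => φ.symm (ℓ, i)) := by
      intro a b hab
      simpa using congrArg (fun t => (φ t).1) hab
    refine (Function.Injective.hasSum_iff (f := f) (a := g) hinj ?_).mp ?_
    · intro k hk
      simp only [Set.mem_range, not_exists] at hk
      have h2 : (φ k).2 ≠ i := by
        intro h
        exact hk (φ k).1 (by rw [← h]; simp)
      simp [hf, hX, h2]
    · have he : (f ∘ fun ℓ : S => φ.symm (ℓ, i)) =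
          fun ℓ : S => adjoint (x ℓ) (x ℓ g) := by
        funext ℓ
        simp [hf, hX, Function.comp]
      rw [he]
      exact h_sum g
  · rw [if_neg hij]
    have : (fun k : T => adjoint (X k i) (X k j g)) = fun _ => 0 := by
      funext k
      by_cases h : (φ k).2 = i
      · have : X k j = 0 := by rw [hX]; rw [if_neg (h ▸ hij)]
        simp [this]
      · have : X k i = 0 := by rw [hX, if_neg h]
        simp [this]
    rw [this]
    exact hasSum_zero
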